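/- Let F ⊆ ΔΩ be finite, let f : ℕ → F and ω : ℕ → Ω be arbitrary sequences, and suppose the receiver plays a_t = â(f_t) at every period. If the play is calibrated, i.e. limsup_{T→∞} K_T ≤ 0, then the receiver has no regret with respect to every forecast f ∈ F: limsup_{T→∞} (|N_T[f]|/T) · ( max_{a* ∈ A} u_R(ω̄_T[f], a*) − (1/|N_T[f]|) Σ_{t ∈ N_T[f]} u_R(ω_t, a_t) ) ≤ 0 (the term being 0 at horizons where N_T[f] is empty). -/

import Mathlib

open Filter

noncomputable section

variable {Ω : Type*} [Fintype Ω] [DecidableEq Ω]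

/-- The Dirac point mass `δ_ω` as an element of the probability simplex in `ℝ^Ω`. -/
def diracVec (ω : Ω) : EuclideanSpace ℝ Ω := WithLp.toLp 2 (fun a => if a = ω then (1 : ℝ) else 0)

/-- Membership in the probability simplex `ΔΩ`. -/
def memSimplex (q : EuclideanSpace ℝ Ω) : Prop := (∀ a, 0 ≤ q a) ∧ ∑ a, q a = 1

open Classical in
/-- The set of periods `t < T` at which the forecast sequence `f` announced the value `q`. -/
def forecastTimes (f : ℕ → EuclideanSpace ℝ Ω) (q : EuclideanSpace ℝ Ω) (T : ℕ) :
    Finset ℕ := (Finset.range T).filter fun t => f t = q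

/-- The empirical distribution of states over the periods `t < T` where the forecast was `q`
(junk value when that set of periods is empty). -/
def empDist (f : ℕ → EuclideanSpace ℝ Ω) (X : ℕ → Ω) (q : EuclideanSpace ℝ Ω) (T : ℕ) :
    EuclideanSpace ℝ Ω :=
  ((forecastTimes f q T).card : ℝ)⁻¹ • ∑ t ∈ forecastTimes f q T, diracVec (X t)

set_option linter.unusedSectionVars false

lemma sum_apply' {ι : Type*} (s : Finset ι) (g : ι → EuclideanSpace ℝ Ω) (i : Ω) :
    (∑ t ∈ s, g t) i = ∑ t ∈ s, g t i := by
  induction s using Finset.cons_induction with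
  | empty => rfl
  | cons a s ha ih => rw [Finset.sum_cons, Finset.sum_cons, PiLp.add_apply, ih]

lemma norm_le_sqrt_card (x : EuclideanSpace ℝ Ω) (h : ∀ ω, |x ω| ≤ 1) :
    ‖x‖ ≤ Real.sqrt (Fintype.card Ω) := by
  rw [EuclideanSpace.norm_eq]
  apply Real.sqrt_le_sqrt
  calc ∑ i, ‖x i‖ ^ 2 ≤ ∑ _i : Ω, (1:ℝ) := by
        refine Finset.sum_le_sum fun i _ => ?_
        have h1 := h i
        have h2 : ‖x i‖ = |x i| := Real.norm_eq_abs _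
        nlinarith [abs_nonneg (x i)]
    _ = (Fintype.card Ω : ℝ) := by simp

lemma diracVec_nonneg (a ω : Ω) : 0 ≤ diracVec a ω := by
  unfold diracVec; dsimp only; split <;> norm_num

lemma diracVec_le_one (a ω : Ω) : diracVec a ω ≤ 1 := by
  unfold diracVec; dsimp only; split <;> norm_num

lemma empDist_apply (f : ℕ → EuclideanSpace ℝ Ω) (X : ℕ → Ω) (p : EuclideanSpace ℝ Ω)
    (T : ℕ) (ω : Ω) : empDist f X p T ω
      = ((forecastTimes f p T).card : ℝ)⁻¹ * ∑ t ∈ forecastTimes f p T, diracVec (X t) ω := by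
  rw [empDist, PiLp.smul_apply, sum_apply', smul_eq_mul]

lemma empDist_entry (f : ℕ → EuclideanSpace ℝ Ω) (X : ℕ → Ω) (p : EuclideanSpace ℝ Ω)
    (T : ℕ) (ω : Ω) : 0 ≤ empDist f X p T ω ∧ empDist f X p T ω ≤ 1 := by
  rw [empDist_apply]
  set n := (forecastTimes f p T).card with hn
  have h0 : (0:ℝ) ≤ ∑ t ∈ forecastTimes f p T, diracVec (X t) ω :=
    Finset.sum_nonneg fun t _ => diracVec_nonneg _ _
  have h1 : ∑ t ∈ forecastTimes f p T, diracVec (X t) ω ≤ (n:ℝ) := by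
    calc ∑ t ∈ forecastTimes f p T, diracVec (X t) ω
        ≤ ∑ _t ∈ forecastTimes f p T, (1:ℝ) :=
          Finset.sum_le_sum fun t _ => diracVec_le_one _ _
      _ = (n:ℝ) := by simp [hn]
  constructor
  · positivity
  · rcases Nat.eq_zero_or_pos n with h | h
    · simp [h]
    · have hn0 : (0:ℝ) < n := by exact_mod_cast h
      rw [inv_mul_le_iff₀ hn0]
      simpa using h1


open Classical in
/-- If the receiver follows the recommendations `â(f_t)` of a calibrated play
(`limsup` of the calibration score is `≤ 0`), then he has no regret with respect to every
forecast `q ∈ F`. -/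
theorem noRegret_of_calibrated
    {A : Type*} [Fintype A] [Nonempty A]
    (uR : Ω → A → ℝ)
    (ahat : EuclideanSpace ℝ Ω → A)
    (hahat : ∀ q : EuclideanSpace ℝ Ω, memSimplex q →
      ∀ a : A, ∑ ω, q ω * uR ω a ≤ ∑ ω, q ω * uR ω (ahat q))
    (F : Finset (EuclideanSpace ℝ Ω)) (hF : ∀ q ∈ F, memSimplex q)
    (f : ℕ → EuclideanSpace ℝ Ω) (hf : ∀ t, f t ∈ F)
    (X : ℕ → Ω)
    (hcal : limsup (fun T : ℕ => ∑ q ∈ F,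
        ((forecastTimes f q T).card : ℝ) / T * ‖empDist f X q T - q‖) atTop ≤ 0) :
    ∀ q ∈ F,
      limsup (fun T : ℕ =>
        if (forecastTimes f q T).card = 0 then 0 else
          ((forecastTimes f q T).card : ℝ) / T *
            ((⨆ a : A, ∑ ω, (empDist f X q T) ω * uR ω a) -
              ((forecastTimes f q T).card : ℝ)⁻¹ *
                ∑ t ∈ forecastTimes f q T, uR (X t) (ahat (f t)))) atTop ≤ 0 := by
  intro q hq
  -- the utility vectors and their norm bound
  set v : A → EuclideanSpace ℝ Ω := fun a => WithLp.toLp 2 (fun ω => uR ω a) with hv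
  obtain ⟨M, hMub⟩ := (Set.finite_range fun a : A => ‖v a‖).bddAbove
  have hM' : ∀ a : A, ‖v a‖ ≤ M := fun a => hMub ⟨a, rfl⟩
  have hM0 : 0 ≤ M := le_trans (norm_nonneg _) (hM' (Classical.arbitrary A))
  -- the calibration score
  set cal : ℕ → ℝ := fun T => ∑ p ∈ F,
      ((forecastTimes f p T).card : ℝ) / T * ‖empDist f X p T - p‖ with hcaldef
  have hcal0 : ∀ T, 0 ≤ cal T := fun T => Finset.sum_nonneg fun p _ =>
    mul_nonneg (div_nonneg (Nat.cast_nonneg _) (Nat.cast_nonneg _)) (norm_nonneg _)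
  have hfrac : ∀ (p : EuclideanSpace ℝ Ω) (T : ℕ),
      ((forecastTimes f p T).card : ℝ) / T ≤ 1 := by
    intro p T
    rcases Nat.eq_zero_or_pos T with h | h
    · simp [forecastTimes, h]
    · rw [div_le_one (by exact_mod_cast h)]
      exact_mod_cast (Finset.card_filter_le _ _).trans_eq (Finset.card_range T)
  have hfrac0 : ∀ (p : EuclideanSpace ℝ Ω) (T : ℕ),
      (0:ℝ) ≤ ((forecastTimes f p T).card : ℝ) / T := fun p T =>
    div_nonneg (Nat.cast_nonneg _) (Nat.cast_nonneg _)
  -- norm bound on the calibration score terms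
  have hnormb : ∀ p ∈ F, ∀ T : ℕ,
      ‖empDist f X p T - p‖ ≤ 2 * Real.sqrt (Fintype.card Ω) := by
    intro p hp T
    have h1 : ‖empDist f X p T‖ ≤ Real.sqrt (Fintype.card Ω) :=
      norm_le_sqrt_card _ fun ω => abs_le.2
        ⟨by linarith [(empDist_entry f X p T ω).1], (empDist_entry f X p T ω).2⟩
    have h2 : ‖p‖ ≤ Real.sqrt (Fintype.card Ω) := by
      refine norm_le_sqrt_card _ fun ω => abs_le.2 ⟨by linarith [(hF p hp).1 ω], ?_⟩
      have := Finset.single_le_sum (f := fun ω => p ω) (fun i _ => (hF p hp).1 i)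
        (Finset.mem_univ ω)
      rw [(hF p hp).2] at this; exact this
    calc ‖empDist f X p T - p‖ ≤ ‖empDist f X p T‖ + ‖p‖ := norm_sub_le _ _
      _ ≤ 2 * Real.sqrt (Fintype.card Ω) := by linarith
  have hbdd : IsBoundedUnder (· ≤ ·) atTop cal := by
    refine isBoundedUnder_of ⟨(F.card : ℝ) * (2 * Real.sqrt (Fintype.card Ω)), fun T => ?_⟩
    calc cal T ≤ ∑ _p ∈ F, 2 * Real.sqrt (Fintype.card Ω) := by
          refine Finset.sum_le_sum fun p hp => ?_
          calc ((forecastTimes f p T).card : ℝ) / T * ‖empDist f X p T - p‖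
              ≤ 1 * (2 * Real.sqrt (Fintype.card Ω)) :=
                mul_le_mul (hfrac p T) (hnormb p hp T) (norm_nonneg _) one_pos.le
            _ = 2 * Real.sqrt (Fintype.card Ω) := one_mul _
      _ = (F.card : ℝ) * (2 * Real.sqrt (Fintype.card Ω)) := by
          rw [Finset.sum_const, nsmul_eq_mul]
  have hcalT : Tendsto cal atTop (nhds 0) :=
    tendsto_order.2 ⟨fun a ha => Eventually.of_forall fun T => lt_of_lt_of_le ha (hcal0 T),
      fun b hb => eventually_lt_of_limsup_lt (lt_of_le_of_lt hcal hb) hbdd⟩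
  -- sum against empirical distribution
  have hbval : ∀ (T : ℕ) (a : A), ∑ ω, empDist f X q T ω * uR ω a
      = ((forecastTimes f q T).card : ℝ)⁻¹ * ∑ t ∈ forecastTimes f q T, uR (X t) a := by
    intro T a
    calc ∑ ω, empDist f X q T ω * uR ω a
        = ((forecastTimes f q T).card : ℝ)⁻¹ *
            ∑ ω, (∑ t ∈ forecastTimes f q T, diracVec (X t) ω) * uR ω a := by
          rw [Finset.mul_sum]
          exact Finset.sum_congr rfl fun ω _ => by rw [empDist_apply]; ring
      _ = ((forecastTimes f q T).card : ℝ)⁻¹ *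
            ∑ t ∈ forecastTimes f q T, ∑ ω, diracVec (X t) ω * uR ω a := by
          congr 1
          simp_rw [Finset.sum_mul]
          rw [Finset.sum_comm]
      _ = ((forecastTimes f q T).card : ℝ)⁻¹ * ∑ t ∈ forecastTimes f q T, uR (X t) a := by
          congr 1
          refine Finset.sum_congr rfl fun t _ => ?_
          simp [diracVec, ite_mul]
  -- Cauchy–Schwarz bound
  have hdiff : ∀ (x y : EuclideanSpace ℝ Ω) (a : A),
      ∑ ω, x ω * uR ω a - ∑ ω, y ω * uR ω a ≤ ‖x - y‖ * M := by
    intro x y a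
    have h1 : ∑ ω, x ω * uR ω a - ∑ ω, y ω * uR ω a
        = (inner ℝ (x - y) (v a) : ℝ) := by
      rw [← Finset.sum_sub_distrib]
      rw [PiLp.inner_apply]
      refine Finset.sum_congr rfl fun ω _ => ?_
      rw [RCLike.inner_apply, conj_trivial, PiLp.sub_apply]
      show x ω * uR ω a - y ω * uR ω a = uR ω a * (x ω - y ω)
      ring
    rw [h1]
    exact (real_inner_le_norm _ _).trans
      (mul_le_mul_of_nonneg_left (hM' a) (norm_nonneg _))
  -- the empirical distribution is in the simplex when nonempty
  have hgS : ∀ T : ℕ, (forecastTimes f q T).card ≠ 0 → memSimplex (empDist f X q T) := by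
    intro T hT
    refine ⟨fun ω => (empDist_entry f X q T ω).1, ?_⟩
    have : ∑ ω, empDist f X q T ω
        = ((forecastTimes f q T).card : ℝ)⁻¹ * ∑ t ∈ forecastTimes f q T, ∑ ω, diracVec (X t) ω := by
      simp_rw [empDist_apply]
      rw [← Finset.mul_sum]
      congr 1
      rw [Finset.sum_comm]
    rw [this]
    have hsum1 : ∀ t, ∑ ω, diracVec (X t) ω = 1 := by intro t; simp [diracVec]
    simp only [hsum1, Finset.sum_const, nsmul_eq_mul, mul_one]
    rw [inv_mul_cancel₀]
    exact_mod_cast hT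
  -- pointwise bounds on the regret
  have hreg0 : ∀ T : ℕ, (0:ℝ) ≤
      if (forecastTimes f q T).card = 0 then 0 else
        ((forecastTimes f q T).card : ℝ) / T *
          ((⨆ a : A, ∑ ω, (empDist f X q T) ω * uR ω a) -
            ((forecastTimes f q T).card : ℝ)⁻¹ *
              ∑ t ∈ forecastTimes f q T, uR (X t) (ahat (f t))) := by
    intro T
    split
    · exact le_refl 0
    · rename_i hT
      refine mul_nonneg (hfrac0 q T) ?_
      rw [sub_nonneg]
      have hval : ∑ t ∈ forecastTimes f q T, uR (X t) (ahat (f t))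
          = ∑ t ∈ forecastTimes f q T, uR (X t) (ahat q) :=
        Finset.sum_congr rfl fun t ht => by
          rw [(Finset.mem_filter.1 ht).2]
      rw [hval, ← hbval T (ahat q)]
      exact le_ciSup (f := fun a : A => ∑ ω, empDist f X q T ω * uR ω a)
        (Set.Finite.bddAbove (Set.finite_range _)) (ahat q)
  have hregle : ∀ T : ℕ,
      (if (forecastTimes f q T).card = 0 then 0 else
        ((forecastTimes f q T).card : ℝ) / T *
          ((⨆ a : A, ∑ ω, (empDist f X q T) ω * uR ω a) -
            ((forecastTimes f q T).card : ℝ)⁻¹ *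
              ∑ t ∈ forecastTimes f q T, uR (X t) (ahat (f t))))
      ≤ 2 * M * cal T := by
    intro T
    split
    · exact mul_nonneg (by linarith) (hcal0 T)
    · rename_i hT
      have hval : ((forecastTimes f q T).card : ℝ)⁻¹ *
            ∑ t ∈ forecastTimes f q T, uR (X t) (ahat (f t))
          = ∑ ω, empDist f X q T ω * uR ω (ahat q) := by
        rw [hbval T (ahat q)]
        congr 1
        exact Finset.sum_congr rfl fun t ht => by rw [(Finset.mem_filter.1 ht).2]
      have hsup : (⨆ a : A, ∑ ω, (empDist f X q T) ω * uR ω a)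
          ≤ ∑ ω, empDist f X q T ω * uR ω (ahat q) + 2 * M * ‖empDist f X q T - q‖ := by
        refine ciSup_le fun a => ?_
        have h1 := hdiff (empDist f X q T) q a
        have h2 := hahat q (hF q hq) a
        have h3 := hdiff q (empDist f X q T) (ahat q)
        rw [norm_sub_rev] at h3
        linarith
      calc ((forecastTimes f q T).card : ℝ) / T *
            ((⨆ a : A, ∑ ω, (empDist f X q T) ω * uR ω a) -
              ((forecastTimes f q T).card : ℝ)⁻¹ *
                ∑ t ∈ forecastTimes f q T, uR (X t) (ahat (f t)))
          ≤ ((forecastTimes f q T).card : ℝ) / T * (2 * M * ‖empDist f X q T - q‖) := by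
            refine mul_le_mul_of_nonneg_left ?_ (hfrac0 q T)
            rw [hval]; linarith
        _ = 2 * M * (((forecastTimes f q T).card : ℝ) / T * ‖empDist f X q T - q‖) := by ring
        _ ≤ 2 * M * cal T := by
            refine mul_le_mul_of_nonneg_left ?_ (by linarith)
            exact Finset.single_le_sum (f := fun p =>
              ((forecastTimes f p T).card : ℝ) / T * ‖empDist f X p T - p‖)
              (fun p _ => mul_nonneg (hfrac0 p T) (norm_nonneg _)) hq
  have h2M : Tendsto (fun T => 2 * M * cal T) atTop (nhds 0) := by
    simpa using hcalT.const_mul (2 * M)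
  exact le_of_eq (squeeze_zero hreg0 hregle h2M).limsup_eq


end
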